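/- Let r, s ∈ ℤ, and in ℤ[[x₁,x₂,y₁,y₂]] define Φ₁ = x₁ + y₁ + x₁y₁ − s·x₂y₂ and Φ₂ = x₂ + y₂ + x₁y₂ + x₂y₁ + r·x₂y₂, and let g(x₁,x₂) = x₂·Σ_{t≥0}(−1)^t x₁^t ∈ ℤ[[x₁,x₂]] (the expansion of x₂(1+x₁)^{−1}). Then g(Φ₁, Φ₂) = F_{r,s}(g(x₁,x₂), g(y₁,y₂)) in ℤ[[x₁,x₂,y₁,y₂]]; that is, g is a homomorphism from the two-dimensional formal group law Φ = (Φ₁,Φ₂) (the Weil restriction of the multiplicative formal group law along ℤ[T]/(T²−rT+s) over ℤ) to the one-dimensional formal group law F_{r,s}. -/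

import Mathlib

/-- Substitution of a family of power series into a multivariate power series. -/
noncomputable def msubst {σ τ R : Type*} [Fintype σ] [DecidableEq σ] [CommRing R]
    (a : σ → MvPowerSeries τ R) (f : MvPowerSeries σ R) : MvPowerSeries τ R :=
  fun e => ∑ d ∈ Finset.Iic (Finsupp.equivFunOnFinite.symm (fun _ : σ => e.sum fun _ n => n)),
    MvPowerSeries.coeff (R := R) d f * MvPowerSeries.coeff (R := R) e (∏ s : σ, a s ^ d s)


open MvPowerSeries Finset

set_option linter.unusedSectionVars false
set_option maxHeartbeats 1000000

section Theory
variable {σ τ R : Type*} [Fintype σ] [DecidableEq σ] [DecidableEq τ] [CommRing R]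

def wt {α : Type*} (e : α →₀ ℕ) : ℕ := e.sum fun _ n => n

lemma wt_add {α : Type*} (e₁ e₂ : α →₀ ℕ) : wt (e₁ + e₂) = wt e₁ + wt e₂ :=
  Finsupp.sum_add_index' (fun _ => rfl) (fun _ _ _ => rfl)

lemma apply_le_wt {α : Type*} (e : α →₀ ℕ) (i : α) : e i ≤ wt e := by
  by_cases h : i ∈ e.support
  · exact Finset.single_le_sum (fun _ _ => Nat.zero_le _) h
  · simp [Finsupp.notMem_support_iff.mp h]

lemma wt_eq_zero_iff {α : Type*} {e : α →₀ ℕ} : wt e = 0 ↔ e = 0 := by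
  constructor
  · intro h; ext i; exact Nat.le_zero.mp (h ▸ apply_le_wt e i)
  · rintro rfl; simp [wt]

def OrdGe (n : ℕ) (f : MvPowerSeries τ R) : Prop :=
  ∀ e : τ →₀ ℕ, wt e < n → MvPowerSeries.coeff (R := R) e f = 0

lemma ordGe_one {f : MvPowerSeries τ R} (h : constantCoeff (σ := τ) (R := R) f = 0) : OrdGe 1 f := by
  intro e he
  have : e = 0 := wt_eq_zero_iff.mp (Nat.lt_one_iff.mp he)
  simpa [this, ← coeff_zero_eq_constantCoeff] using h

lemma OrdGe.mul {m n : ℕ} {f g : MvPowerSeries τ R} (hf : OrdGe m f) (hg : OrdGe n g) :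
    OrdGe (m + n) (f * g) := by
  intro e he
  rw [MvPowerSeries.coeff_mul]
  refine Finset.sum_eq_zero fun p hp => ?_
  rw [Finset.HasAntidiagonal.mem_antidiagonal] at hp
  have hw : wt p.1 + wt p.2 < m + n := by rw [← wt_add, hp]; exact he
  rcases Nat.lt_or_ge (wt p.1) m with h | h
  · rw [hf _ h, zero_mul]
  · rw [hg _ (by omega), mul_zero]

lemma OrdGe.pow {f : MvPowerSeries τ R} (hf : OrdGe 1 f) (n : ℕ) : OrdGe n (f ^ n) := by
  induction n with
  | zero => intro e he; omega
  | succ k ih => rw [pow_succ]; exact ih.mul hf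

lemma ordGe_prod {a : σ → MvPowerSeries τ R}
    (H : ∀ i, constantCoeff (σ := τ) (R := R) (a i) = 0) (d : σ →₀ ℕ) :
    OrdGe (∑ s : σ, d s) (∏ s : σ, a s ^ d s) := by
  classical
  induction (Finset.univ : Finset σ) using Finset.cons_induction with
  | empty => exact fun e he => absurd he (by simp at he)
  | cons i t hi ih =>
      rw [Finset.sum_cons, Finset.prod_cons]
      exact ((ordGe_one (H i)).pow (d i)).mul ih

variable {a : σ → MvPowerSeries τ R}

/-- the bound used in the definition of msubst -/
noncomputable def Bnd (e : τ →₀ ℕ) : σ →₀ ℕ := Finsupp.equivFunOnFinite.symm (fun _ : σ => wt e)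

lemma coeff_prod_eq_zero (H : ∀ i, constantCoeff (σ := τ) (R := R) (a i) = 0) (e : τ →₀ ℕ) {d : σ →₀ ℕ} (hd : ¬ d ≤ (Bnd e : σ →₀ ℕ)) :
    MvPowerSeries.coeff (R := R) e (∏ s : σ, a s ^ d s) = 0 := by
  refine ordGe_prod H d e ?_
  rw [Finsupp.le_iff] at hd
  push_neg at hd
  obtain ⟨i, -, hi⟩ := hd
  have : d i ≤ ∑ s : σ, d s := Finset.single_le_sum (fun _ _ => Nat.zero_le _) (mem_univ i)
  have hb : (Bnd e : σ →₀ ℕ) i = wt e := rfl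
  omega

lemma coeff_msubst (H : ∀ i, constantCoeff (σ := τ) (R := R) (a i) = 0) (f : MvPowerSeries σ R) {e : τ →₀ ℕ} {D : Finset (σ →₀ ℕ)}
    (hD : Finset.Iic (Bnd e : σ →₀ ℕ) ⊆ D) :
    MvPowerSeries.coeff (R := R) e (msubst a f) =
      ∑ d ∈ D, MvPowerSeries.coeff (R := R) d f * MvPowerSeries.coeff (R := R) e (∏ s : σ, a s ^ d s) := by
  have : MvPowerSeries.coeff (R := R) e (msubst a f) =
      ∑ d ∈ Finset.Iic (Bnd e : σ →₀ ℕ),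
        MvPowerSeries.coeff (R := R) d f * MvPowerSeries.coeff (R := R) e (∏ s : σ, a s ^ d s) := rfl
  rw [this]
  refine Finset.sum_subset hD fun d _ hd => ?_
  rw [coeff_prod_eq_zero H e (by simpa using hd), mul_zero]

lemma msubst_sub (f g : MvPowerSeries σ R) :
    msubst a (f - g) = msubst a f - msubst a g := by
  ext e
  have h1 : MvPowerSeries.coeff (R := R) e (msubst a (f - g)) =
      ∑ d ∈ Finset.Iic (Bnd e : σ →₀ ℕ),
        MvPowerSeries.coeff (R := R) d (f - g) * MvPowerSeries.coeff (R := R) e (∏ s : σ, a s ^ d s) := rfl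
  have h2 : MvPowerSeries.coeff (R := R) e (msubst a f) =
      ∑ d ∈ Finset.Iic (Bnd e : σ →₀ ℕ),
        MvPowerSeries.coeff (R := R) d f * MvPowerSeries.coeff (R := R) e (∏ s : σ, a s ^ d s) := rfl
  have h3 : MvPowerSeries.coeff (R := R) e (msubst a g) =
      ∑ d ∈ Finset.Iic (Bnd e : σ →₀ ℕ),
        MvPowerSeries.coeff (R := R) d g * MvPowerSeries.coeff (R := R) e (∏ s : σ, a s ^ d s) := rfl
  rw [map_sub, h1, h2, h3, ← Finset.sum_sub_distrib]
  exact Finset.sum_congr rfl fun d _ => by rw [map_sub, sub_mul]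

lemma msubst_add (f g : MvPowerSeries σ R) :
    msubst a (f + g) = msubst a f + msubst a g := by
  ext e
  have h1 : MvPowerSeries.coeff (R := R) e (msubst a (f + g)) =
      ∑ d ∈ Finset.Iic (Bnd e : σ →₀ ℕ),
        MvPowerSeries.coeff (R := R) d (f + g) * MvPowerSeries.coeff (R := R) e (∏ s : σ, a s ^ d s) := rfl
  have h2 : MvPowerSeries.coeff (R := R) e (msubst a f) =
      ∑ d ∈ Finset.Iic (Bnd e : σ →₀ ℕ),
        MvPowerSeries.coeff (R := R) d f * MvPowerSeries.coeff (R := R) e (∏ s : σ, a s ^ d s) := rfl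
  have h3 : MvPowerSeries.coeff (R := R) e (msubst a g) =
      ∑ d ∈ Finset.Iic (Bnd e : σ →₀ ℕ),
        MvPowerSeries.coeff (R := R) d g * MvPowerSeries.coeff (R := R) e (∏ s : σ, a s ^ d s) := rfl
  rw [map_add, h1, h2, h3, ← Finset.sum_add_distrib]
  exact Finset.sum_congr rfl fun d _ => by rw [map_add, add_mul]

lemma msubst_C (c : R) : msubst a (MvPowerSeries.C (σ := σ) (R := R) c) = MvPowerSeries.C (σ := τ) (R := R) c := by
  ext e
  have h1 : MvPowerSeries.coeff (R := R) e (msubst a (MvPowerSeries.C (σ := σ) (R := R) c)) =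
      ∑ d ∈ Finset.Iic (Bnd e : σ →₀ ℕ),
        MvPowerSeries.coeff (R := R) d (MvPowerSeries.C (σ := σ) (R := R) c) *
          MvPowerSeries.coeff (R := R) e (∏ s : σ, a s ^ d s) := rfl
  rw [h1]
  rw [Finset.sum_eq_single (0 : σ →₀ ℕ)]
  · simp [MvPowerSeries.coeff_C, MvPowerSeries.coeff_one]
  · intro d _ hd
    rw [MvPowerSeries.coeff_C, if_neg hd, zero_mul]
  · intro h
    exact absurd (Finset.mem_Iic.mpr bot_le) h

lemma msubst_one : msubst a (1 : MvPowerSeries σ R) = 1 := by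
  have := msubst_C (a := a) (1 : R)
  simpa using this

lemma msubst_X (H : ∀ i, constantCoeff (σ := τ) (R := R) (a i) = 0) (i : σ) :
    msubst a (MvPowerSeries.X i) = a i := by
  ext e
  rw [coeff_msubst H (MvPowerSeries.X i)
    (D := insert (Finsupp.single i 1) (Finset.Iic (Bnd e : σ →₀ ℕ)))
    (Finset.subset_insert _ _)]
  rw [Finset.sum_eq_single (Finsupp.single i 1)]
  · rw [MvPowerSeries.coeff_X, if_pos rfl, one_mul]
    congr 1
    rw [Finset.prod_eq_single i]
    · simp
    · intro b _ hb
      rw [Finsupp.single_apply, if_neg (fun h => hb h.symm), pow_zero]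
    · simp
  · intro d _ hd
    rw [MvPowerSeries.coeff_X, if_neg hd, zero_mul]
  · intro h
    exact absurd (Finset.mem_insert_self _ _) h

lemma coeff_PP_eq_zero (H : ∀ i, constantCoeff (σ := τ) (R := R) (a i) = 0) (e : τ →₀ ℕ) {d₁ d₂ : σ →₀ ℕ}
    (h : ¬ d₁ + d₂ ≤ (Bnd e : σ →₀ ℕ)) :
    MvPowerSeries.coeff (R := R) e ((∏ s : σ, a s ^ d₁ s) * ∏ s : σ, a s ^ d₂ s) = 0 := by
  rw [MvPowerSeries.coeff_mul]
  refine Finset.sum_eq_zero fun q hq => ?_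
  rw [Finset.HasAntidiagonal.mem_antidiagonal] at hq
  rw [Finsupp.le_iff] at h
  push_neg at h
  obtain ⟨i, -, hi⟩ := h
  have hb : (Bnd e : σ →₀ ℕ) i = wt e := rfl
  have h1 : d₁ i ≤ ∑ s : σ, d₁ s := Finset.single_le_sum (fun _ _ => Nat.zero_le _) (mem_univ i)
  have h2 : d₂ i ≤ ∑ s : σ, d₂ s := Finset.single_le_sum (fun _ _ => Nat.zero_le _) (mem_univ i)
  have he : wt q.1 + wt q.2 = wt e := by rw [← wt_add, hq]
  have hd : (d₁ + d₂) i = d₁ i + d₂ i := rfl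
  rcases Nat.lt_or_ge (wt q.1) (∑ s : σ, d₁ s) with hc | hc
  · rw [ordGe_prod H d₁ q.1 hc, zero_mul]
  · rw [ordGe_prod H d₂ q.2 (by omega), mul_zero]

lemma msubst_mul (H : ∀ i, constantCoeff (σ := τ) (R := R) (a i) = 0) (f g : MvPowerSeries σ R) :
    msubst a (f * g) = msubst a f * msubst a g := by
  ext e
  set S := Finset.Iic (Bnd e : σ →₀ ℕ) with hS
  -- common value
  have key : ∀ side : MvPowerSeries τ R, True := fun _ => trivial
  -- RHS
  have hrhs : MvPowerSeries.coeff (R := R) e (msubst a f * msubst a g) =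
      ∑ d₁ ∈ S, ∑ d₂ ∈ S, MvPowerSeries.coeff (R := R) d₁ f * MvPowerSeries.coeff (R := R) d₂ g *
        MvPowerSeries.coeff (R := R) e ((∏ s : σ, a s ^ d₁ s) * ∏ s : σ, a s ^ d₂ s) := by
    rw [MvPowerSeries.coeff_mul]
    have step : ∀ q ∈ Finset.HasAntidiagonal.antidiagonal e,
        MvPowerSeries.coeff (R := R) q.1 (msubst a f) * MvPowerSeries.coeff (R := R) q.2 (msubst a g) =
        ∑ d₁ ∈ S, ∑ d₂ ∈ S,
          (MvPowerSeries.coeff (R := R) d₁ f * MvPowerSeries.coeff (R := R) q.1 (∏ s : σ, a s ^ d₁ s)) *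
          (MvPowerSeries.coeff (R := R) d₂ g * MvPowerSeries.coeff (R := R) q.2 (∏ s : σ, a s ^ d₂ s)) := by
      intro q hq
      rw [Finset.HasAntidiagonal.mem_antidiagonal] at hq
      have hle : ∀ t : τ →₀ ℕ, t ≤ e → Finset.Iic (Bnd t : σ →₀ ℕ) ⊆ S := by
        intro t ht
        apply Finset.Iic_subset_Iic.mpr
        intro i
        show wt t ≤ wt e
        calc wt t ≤ wt t + wt (e - t) := Nat.le_add_right _ _
        _ = wt e := by rw [← wt_add, add_tsub_cancel_of_le ht]
      rw [coeff_msubst H f (hle q.1 (hq ▸ le_add_right le_rfl)),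
        coeff_msubst H g (hle q.2 (hq ▸ le_add_left le_rfl)),
        Finset.sum_mul_sum]
    rw [Finset.sum_congr rfl step, Finset.sum_comm]
    refine Finset.sum_congr rfl fun d₁ _ => ?_
    rw [Finset.sum_comm]
    refine Finset.sum_congr rfl fun d₂ _ => ?_
    rw [MvPowerSeries.coeff_mul, Finset.mul_sum]
    exact Finset.sum_congr rfl fun q _ => by ring
  -- LHS
  have hlhs : MvPowerSeries.coeff (R := R) e (msubst a (f * g)) =
      ∑ d₁ ∈ S, ∑ d₂ ∈ S, MvPowerSeries.coeff (R := R) d₁ f * MvPowerSeries.coeff (R := R) d₂ g *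
        MvPowerSeries.coeff (R := R) e ((∏ s : σ, a s ^ d₁ s) * ∏ s : σ, a s ^ d₂ s) := by
    rw [coeff_msubst H (f * g) (Finset.Subset.refl S)]
    have step : ∀ d ∈ S, MvPowerSeries.coeff (R := R) d (f * g) *
        MvPowerSeries.coeff (R := R) e (∏ s : σ, a s ^ d s) =
        ∑ d₁ ∈ S, ∑ d₂ ∈ S, if d₁ + d₂ = d then
          MvPowerSeries.coeff (R := R) d₁ f * MvPowerSeries.coeff (R := R) d₂ g *
            MvPowerSeries.coeff (R := R) e (∏ s : σ, a s ^ (d₁ + d₂) s) else 0 := by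
      intro d hd
      rw [MvPowerSeries.coeff_mul, Finset.sum_mul]
      have hanti : Finset.HasAntidiagonal.antidiagonal d =
          (S ×ˢ S).filter (fun p : (σ →₀ ℕ) × (σ →₀ ℕ) => p.1 + p.2 = d) := by
        ext p
        simp only [Finset.HasAntidiagonal.mem_antidiagonal, Finset.mem_filter, Finset.mem_product, hS,
          Finset.mem_Iic]
        constructor
        · intro hp
          refine ⟨⟨?_, ?_⟩, hp⟩
          · exact le_trans (hp ▸ le_add_right le_rfl) (Finset.mem_Iic.mp hd)
          · exact le_trans (hp ▸ le_add_left le_rfl) (Finset.mem_Iic.mp hd)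
        · exact fun hp => hp.2
      rw [hanti, Finset.sum_filter, Finset.sum_product]
      refine Finset.sum_congr rfl fun d₁ _ => Finset.sum_congr rfl fun d₂ _ => ?_
      by_cases h : d₁ + d₂ = d
      · rw [if_pos h, if_pos h, h]
      · rw [if_neg h, if_neg h]
    rw [Finset.sum_congr rfl step, Finset.sum_comm]
    refine Finset.sum_congr rfl fun d₁ _ => ?_
    rw [Finset.sum_comm]
    refine Finset.sum_congr rfl fun d₂ _ => ?_
    rw [Finset.sum_ite_eq]
    have hPP : (∏ s : σ, a s ^ (d₁ + d₂) s) = (∏ s : σ, a s ^ d₁ s) * ∏ s : σ, a s ^ d₂ s := by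
      rw [← Finset.prod_mul_distrib]
      exact Finset.prod_congr rfl fun s _ => by rw [Finsupp.add_apply, pow_add]
    by_cases h : d₁ + d₂ ∈ S
    · rw [if_pos h, hPP]
    · rw [if_neg h, coeff_PP_eq_zero H e (by simpa [hS] using h), mul_zero]
  rw [hlhs, hrhs]

end Theory

section Concrete

open MvPowerSeries

lemma fin2_eq_iff (m n : Fin 2 →₀ ℕ) : m = n ↔ m 0 = n 0 ∧ m 1 = n 1 := by
  constructor
  · rintro rfl; exact ⟨rfl, rfl⟩
  · rintro ⟨h0, h1⟩
    ext j
    fin_cases j <;> assumption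

noncomputable def gS : MvPowerSeries (Fin 2) ℤ := fun m => if m 1 = 1 then (-1 : ℤ) ^ (m 0) else 0

noncomputable def geomS (s : ℤ) : MvPowerSeries (Fin 2) ℤ :=
  fun e => if e 0 = e 1 then s ^ (e 0) else 0

lemma coeff_gS (m : Fin 2 →₀ ℕ) :
    MvPowerSeries.coeff (R := ℤ) m gS = if m 1 = 1 then (-1 : ℤ) ^ (m 0) else 0 := rfl

lemma coeff_geomS (s : ℤ) (m : Fin 2 →₀ ℕ) :
    MvPowerSeries.coeff (R := ℤ) m (geomS s) = if m 0 = m 1 then s ^ (m 0) else 0 := rfl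

lemma neg_pow_helper (k : ℕ) (h : 1 ≤ k) : (-1 : ℤ) ^ k + (-1) ^ (k - 1) = 0 := by
  obtain ⟨j, rfl⟩ : ∃ j, k = j + 1 := ⟨k - 1, by omega⟩
  rw [Nat.add_sub_cancel, pow_succ]
  ring

lemma pow_sub_helper (s : ℤ) (k : ℕ) (h : 1 ≤ k) : s ^ k - s ^ (k - 1) * s = 0 := by
  obtain ⟨j, rfl⟩ : ∃ j, k = j + 1 := ⟨k - 1, by omega⟩
  rw [Nat.add_sub_cancel, pow_succ]
  ring

lemma g_mul_key : gS * (1 + MvPowerSeries.X 0) = MvPowerSeries.X 1 := by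
  ext m
  rw [mul_add, mul_one, map_add, X_def, MvPowerSeries.coeff_mul_monomial,
    MvPowerSeries.coeff_X]
  set E : Fin 2 →₀ ℕ := Finsupp.single 0 1 with hE
  have hE0 : E 0 = 1 := by
    rw [hE, Finsupp.single_apply, if_pos rfl]
  have hE1 : E 1 = 0 := by
    rw [hE, Finsupp.single_apply, if_neg (by decide : ¬ (0 : Fin 2) = 1)]
  have hsub1 : (m - E) 1 = m 1 := by rw [Finsupp.tsub_apply, hE1, Nat.sub_zero]
  have hsub0 : (m - E) 0 = m 0 - 1 := by rw [Finsupp.tsub_apply, hE0]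
  have hEle : E ≤ m ↔ 1 ≤ m 0 := by
    rw [Finsupp.le_def, Fin.forall_fin_two, hE0, hE1]
    omega
  have hXcond : m = Finsupp.single (1 : Fin 2) 1 ↔ m 0 = 0 ∧ m 1 = 1 := by
    rw [fin2_eq_iff]
    rw [Finsupp.single_apply, Finsupp.single_apply, if_neg (by decide : ¬ (1 : Fin 2) = 0),
      if_pos rfl]
  simp only [coeff_gS, hsub0, hsub1, mul_one, hEle, hXcond]
  split_ifs <;>
    first
      | rfl
      | omega
      | (exact neg_pow_helper (m 0) (by omega))
      | (rw [show m 0 = 0 from by omega]; norm_num)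
      | norm_num

lemma geom_mul_key (s : ℤ) :
    geomS s *
      (1 - MvPowerSeries.C (σ := Fin 2) (R := ℤ) s * MvPowerSeries.X 0 * MvPowerSeries.X 1) = 1 := by
  have hmon : MvPowerSeries.C (σ := Fin 2) (R := ℤ) s * MvPowerSeries.X 0 * MvPowerSeries.X 1 =
      MvPowerSeries.monomial (R := ℤ) (Finsupp.single 0 1 + Finsupp.single 1 1) s := by
    rw [← monomial_zero_eq_C_apply, X_def, X_def, monomial_mul_monomial,
      monomial_mul_monomial]
    rw [zero_add, mul_one, mul_one]
  ext m
  rw [mul_sub, mul_one, map_sub, hmon, MvPowerSeries.coeff_mul_monomial,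
    MvPowerSeries.coeff_one]
  set D : Fin 2 →₀ ℕ := Finsupp.single 0 1 + Finsupp.single 1 1 with hD
  have hD0 : D 0 = 1 := by
    rw [hD, Finsupp.add_apply, Finsupp.single_apply, Finsupp.single_apply,
      if_pos rfl, if_neg (by decide : ¬ (1 : Fin 2) = 0)]
    rfl
  have hD1 : D 1 = 1 := by
    rw [hD, Finsupp.add_apply, Finsupp.single_apply, Finsupp.single_apply,
      if_neg (by decide : ¬ (0 : Fin 2) = 1), if_pos rfl]
  have hle : D ≤ m ↔ 1 ≤ m 0 ∧ 1 ≤ m 1 := by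
    rw [Finsupp.le_def, Fin.forall_fin_two, hD0, hD1]
  have hsub0 : (m - D) 0 = m 0 - 1 := by rw [Finsupp.tsub_apply, hD0]
  have hsub1 : (m - D) 1 = m 1 - 1 := by rw [Finsupp.tsub_apply, hD1]
  have hm0 : m = 0 ↔ m 0 = 0 ∧ m 1 = 0 := by
    rw [fin2_eq_iff]
    simp
  simp only [coeff_geomS, hsub0, hsub1, hle, hm0]
  split_ifs <;>
    first
      | rfl
      | omega
      | (exact pow_sub_helper s (m 0) (by omega))
      | (rw [show m 0 = 0 from by omega]; norm_num)
      | norm_num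
      | (exfalso; omega)

end Concrete

/-- `g(x₁,x₂) = x₂(1+x₁)⁻¹` is a homomorphism from the Weil restriction
`Φ = (Φ₁,Φ₂)` of the multiplicative formal group law along `ℤ[T]/(T²−rT+s)` to `F_{r,s}`. -/
theorem g_hom_Phi_Frs (r s : ℤ) :
    -- the two-dimensional formal group law Φ
    let Φ₁ : MvPowerSeries (Fin 2 ⊕ Fin 2) ℤ :=
      MvPowerSeries.X (Sum.inl 0) + MvPowerSeries.X (Sum.inr 0) +
        MvPowerSeries.X (Sum.inl 0) * MvPowerSeries.X (Sum.inr 0) -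
        MvPowerSeries.C (σ := Fin 2 ⊕ Fin 2) (R := ℤ) s *
          (MvPowerSeries.X (Sum.inl 1) * MvPowerSeries.X (Sum.inr 1))
    let Φ₂ : MvPowerSeries (Fin 2 ⊕ Fin 2) ℤ :=
      MvPowerSeries.X (Sum.inl 1) + MvPowerSeries.X (Sum.inr 1) +
        MvPowerSeries.X (Sum.inl 0) * MvPowerSeries.X (Sum.inr 1) +
        MvPowerSeries.X (Sum.inl 1) * MvPowerSeries.X (Sum.inr 0) +
        MvPowerSeries.C (σ := Fin 2 ⊕ Fin 2) (R := ℤ) r *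
          (MvPowerSeries.X (Sum.inl 1) * MvPowerSeries.X (Sum.inr 1))
    -- g(x₁,x₂) = x₂(1+x₁)⁻¹ = x₂·Σ_t (−1)^t x₁^t
    let g : MvPowerSeries (Fin 2) ℤ := fun m => if m 1 = 1 then (-1) ^ (m 0) else 0
    -- F_{r,s} = (x+y+rxy)·Σ_t s^t x^t y^t
    let geom : MvPowerSeries (Fin 2) ℤ := fun e => if e 0 = e 1 then s ^ (e 0) else 0
    let Frs : MvPowerSeries (Fin 2) ℤ :=
      (MvPowerSeries.X 0 + MvPowerSeries.X 1 +
        MvPowerSeries.C (σ := Fin 2) (R := ℤ) r * MvPowerSeries.X 0 * MvPowerSeries.X 1) * geom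
    -- g(Φ₁,Φ₂) = F_{r,s}(g(x₁,x₂), g(y₁,y₂))
    msubst (fun i : Fin 2 => if i = 0 then Φ₁ else Φ₂) g =
      msubst (fun i : Fin 2 =>
        if i = 0 then msubst (fun j : Fin 2 => MvPowerSeries.X (Sum.inl j)) g
        else msubst (fun j : Fin 2 => MvPowerSeries.X (Sum.inr j)) g) Frs := by
  
  intro Φ₁ Φ₂ g geom Frs
  have hg : g = gS := rfl
  have hFrs : Frs = (MvPowerSeries.X 0 + MvPowerSeries.X 1 +
      MvPowerSeries.C (σ := Fin 2) (R := ℤ) r * MvPowerSeries.X 0 * MvPowerSeries.X 1) * geomS s := rfl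
  have hΦ₁ : Φ₁ = MvPowerSeries.X (Sum.inl 0) + MvPowerSeries.X (Sum.inr 0) +
        MvPowerSeries.X (Sum.inl 0) * MvPowerSeries.X (Sum.inr 0) -
        MvPowerSeries.C (σ := Fin 2 ⊕ Fin 2) (R := ℤ) s *
          (MvPowerSeries.X (Sum.inl 1) * MvPowerSeries.X (Sum.inr 1)) := rfl
  have hΦ₂ : Φ₂ = MvPowerSeries.X (Sum.inl 1) + MvPowerSeries.X (Sum.inr 1) +
        MvPowerSeries.X (Sum.inl 0) * MvPowerSeries.X (Sum.inr 1) +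
        MvPowerSeries.X (Sum.inl 1) * MvPowerSeries.X (Sum.inr 0) +
        MvPowerSeries.C (σ := Fin 2 ⊕ Fin 2) (R := ℤ) r *
          (MvPowerSeries.X (Sum.inl 1) * MvPowerSeries.X (Sum.inr 1)) := rfl
  rw [hg, hFrs]
  -- the three substitution families
  set ΦF : Fin 2 → MvPowerSeries (Fin 2 ⊕ Fin 2) ℤ := fun i => if i = 0 then Φ₁ else Φ₂
    with hΦF
  set aL : Fin 2 → MvPowerSeries (Fin 2 ⊕ Fin 2) ℤ :=
    fun j => MvPowerSeries.X (Sum.inl j) with haL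
  set aR : Fin 2 → MvPowerSeries (Fin 2 ⊕ Fin 2) ℤ :=
    fun j => MvPowerSeries.X (Sum.inr j) with haR
  have HΦ : ∀ i, MvPowerSeries.constantCoeff (R := ℤ) (ΦF i) = 0 := by
    intro i
    by_cases h : i = 0 <;> simp [hΦF, h, hΦ₁, hΦ₂]
  have HL : ∀ j, MvPowerSeries.constantCoeff (R := ℤ) (aL j) = 0 := by
    intro j; simp [haL]
  have HR : ∀ j, MvPowerSeries.constantCoeff (R := ℤ) (aR j) = 0 := by
    intro j; simp [haR]
  -- key product equations obtained by applying msubst to the 2-variable identities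
  have hgx : msubst aL gS * (1 + MvPowerSeries.X (Sum.inl 0)) = MvPowerSeries.X (Sum.inl 1) := by
    have h1 := congrArg (msubst aL) g_mul_key
    rw [msubst_mul HL, msubst_add, msubst_one, msubst_X HL, msubst_X HL] at h1
    rw [show aL 0 = MvPowerSeries.X (Sum.inl 0) from rfl,
      show aL 1 = MvPowerSeries.X (Sum.inl 1) from rfl] at h1
    exact h1
  have hgy : msubst aR gS * (1 + MvPowerSeries.X (Sum.inr 0)) = MvPowerSeries.X (Sum.inr 1) := by
    have h1 := congrArg (msubst aR) g_mul_key
    rw [msubst_mul HR, msubst_add, msubst_one, msubst_X HR, msubst_X HR] at h1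
    rw [show aR 0 = MvPowerSeries.X (Sum.inr 0) from rfl,
      show aR 1 = MvPowerSeries.X (Sum.inr 1) from rfl] at h1
    exact h1
  have hLHS : msubst ΦF gS * (1 + Φ₁) = Φ₂ := by
    have h1 := congrArg (msubst ΦF) g_mul_key
    rw [msubst_mul HΦ, msubst_add, msubst_one, msubst_X HΦ, msubst_X HΦ] at h1
    rw [show ΦF 0 = Φ₁ from rfl, show ΦF 1 = Φ₂ from rfl] at h1
    exact h1
  set gx := msubst aL gS with hgxd
  set gy := msubst aR gS with hgyd
  set a2 : Fin 2 → MvPowerSeries (Fin 2 ⊕ Fin 2) ℤ := fun i => if i = 0 then gx else gy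
    with ha2
  have hccx : MvPowerSeries.constantCoeff (R := ℤ) gx = 0 := by
    have h2 := congrArg (MvPowerSeries.constantCoeff (R := ℤ)) hgx
    simpa using h2
  have hccy : MvPowerSeries.constantCoeff (R := ℤ) gy = 0 := by
    have h2 := congrArg (MvPowerSeries.constantCoeff (R := ℤ)) hgy
    simpa using h2
  have Ha2 : ∀ i, MvPowerSeries.constantCoeff (R := ℤ) (a2 i) = 0 := by
    intro i
    by_cases h : i = 0 <;> simp [ha2, h, hccx, hccy]
  have hG : msubst a2 (geomS s) *
      (1 - MvPowerSeries.C (R := ℤ) s * gx * gy) = 1 := by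
    have h1 := congrArg (msubst a2) (geom_mul_key s)
    rw [msubst_mul Ha2, msubst_sub, msubst_one, msubst_mul Ha2, msubst_mul Ha2,
      msubst_C, msubst_X Ha2, msubst_X Ha2] at h1
    rw [show a2 0 = gx from rfl, show a2 1 = gy from rfl] at h1
    exact h1
  have hRHS : msubst a2 ((MvPowerSeries.X 0 + MvPowerSeries.X 1 +
      MvPowerSeries.C (σ := Fin 2) (R := ℤ) r * MvPowerSeries.X 0 * MvPowerSeries.X 1) * geomS s) =
      (gx + gy + MvPowerSeries.C (R := ℤ) r * gx * gy) * msubst a2 (geomS s) := by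
    rw [msubst_mul Ha2, msubst_add, msubst_add, msubst_mul Ha2, msubst_mul Ha2,
      msubst_C, msubst_X Ha2, msubst_X Ha2]
    rw [show a2 0 = gx from rfl, show a2 1 = gy from rfl]
  -- ring identities
  have hp : gx * gy * ((1 + MvPowerSeries.X (Sum.inl 0)) * (1 + MvPowerSeries.X (Sum.inr 0))) =
      MvPowerSeries.X (Sum.inl 1) * MvPowerSeries.X (Sum.inr 1) := by
    calc gx * gy * ((1 + MvPowerSeries.X (Sum.inl 0)) * (1 + MvPowerSeries.X (Sum.inr 0)))
        = (gx * (1 + MvPowerSeries.X (Sum.inl 0))) *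
          (gy * (1 + MvPowerSeries.X (Sum.inr 0))) := by ring
      _ = MvPowerSeries.X (Sum.inl 1) * MvPowerSeries.X (Sum.inr 1) := by rw [hgx, hgy]
  have hu_fact : (1 - MvPowerSeries.C (R := ℤ) s * gx * gy) *
      ((1 + MvPowerSeries.X (Sum.inl 0)) * (1 + MvPowerSeries.X (Sum.inr 0))) = 1 + Φ₁ := by
    rw [hΦ₁]
    linear_combination (- MvPowerSeries.C (σ := Fin 2 ⊕ Fin 2) (R := ℤ) s) * hp
  have hΦ₂_fact : (gx + gy + MvPowerSeries.C (R := ℤ) r * gx * gy) *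
      ((1 + MvPowerSeries.X (Sum.inl 0)) * (1 + MvPowerSeries.X (Sum.inr 0))) = Φ₂ := by
    rw [hΦ₂]
    linear_combination (1 + MvPowerSeries.X (Sum.inr 0)) * hgx +
      (1 + MvPowerSeries.X (Sum.inl 0)) * hgy + MvPowerSeries.C (σ := Fin 2 ⊕ Fin 2) (R := ℤ) r * hp
  -- cross-multiplied equality
  have key : msubst ΦF gS * (1 + Φ₁) =
      msubst a2 ((MvPowerSeries.X 0 + MvPowerSeries.X 1 +
        MvPowerSeries.C (σ := Fin 2) (R := ℤ) r * MvPowerSeries.X 0 * MvPowerSeries.X 1) * geomS s) *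
        (1 + Φ₁) := by
    rw [hLHS, hRHS]
    linear_combination (-((gx + gy + MvPowerSeries.C (R := ℤ) r * gx * gy) * msubst a2 (geomS s))) *
        hu_fact.symm -
      ((gx + gy + MvPowerSeries.C (R := ℤ) r * gx * gy) *
        ((1 + MvPowerSeries.X (Sum.inl 0)) * (1 + MvPowerSeries.X (Sum.inr 0)))) * hG -
      hΦ₂_fact
  -- cancel the unit 1 + Φ₁
  have hcc : MvPowerSeries.constantCoeff (R := ℤ) (1 + Φ₁) = ((1 : ℤˣ) : ℤ) := by
    simp [hΦ₁]
  have hv := MvPowerSeries.mul_invOfUnit (1 + Φ₁) 1 hcc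
  set v := MvPowerSeries.invOfUnit (1 + Φ₁) 1 with hvd
  calc msubst ΦF gS = msubst ΦF gS * ((1 + Φ₁) * v) := by rw [hv, mul_one]
    _ = (msubst ΦF gS * (1 + Φ₁)) * v := by ring
    _ = (msubst a2 ((MvPowerSeries.X 0 + MvPowerSeries.X 1 +
        MvPowerSeries.C (σ := Fin 2) (R := ℤ) r * MvPowerSeries.X 0 * MvPowerSeries.X 1) * geomS s) *
        (1 + Φ₁)) * v := by rw [key]
    _ = msubst a2 ((MvPowerSeries.X 0 + MvPowerSeries.X 1 +
        MvPowerSeries.C (σ := Fin 2) (R := ℤ) r * MvPowerSeries.X 0 * MvPowerSeries.X 1) * geomS s) *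
        ((1 + Φ₁) * v) := by ring
    _ = _ := by rw [hv, mul_one]
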